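/- Let E be the exterior algebra over a field K on e_1,...,e_n, and let I be a graded ideal of E. If f ∈ E_1 is such that multiplication by f on M = E/I is 'regular' (i.e., the kernel of multiplication by f on M equals f·M), then M is a free module over the subalgebra K⟨f⟩ = K[f]/(f²). -/

import Mathlib

/-- If `M = E/I` is a cyclic module over the exterior algebra `E = Λ(V)` and `f ∈ E₁` is
regular on `M` (the kernel of multiplication by `f` on `M` equals `f·M`), then `M` is a
free module over the subalgebra `K⟨f⟩ = K[f]/(f²)`: there is a `K`-basis of `M` of the
form `{gᵢ, f·gᵢ}`. -/
theorem stmt2 (K : Type) [Field K] (V : Type) [AddCommGroup V] [Module K V]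
    [FiniteDimensional K V]
    (M : Type) [AddCommGroup M] [Module (ExteriorAlgebra K V) M]
    [Module K M] [IsScalarTower K (ExteriorAlgebra K V) M]
    (hcyc : ∃ m₀ : M, ∀ x : M, ∃ r : ExteriorAlgebra K V, x = r • m₀)
    (f : V)
    (hreg : ∀ m : M, ExteriorAlgebra.ι K f • m = 0 ↔
      ∃ m', m = ExteriorAlgebra.ι K f • m') :
    ∃ (α : Type) (g : α → M) (B : Module.Basis (α × Bool) K M),
      ∀ i : α, B (i, false) = g i ∧
        B (i, true) = ExteriorAlgebra.ι K f • g i := by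
  classical
  let φ : M →ₗ[K] M :=
    { toFun := fun m => ExteriorAlgebra.ι K f • m
      map_add' := fun x y => smul_add _ _ _
      map_smul' := fun c m => smul_comm (ExteriorAlgebra.ι K f) c m }
  have hφ : ∀ m, φ m = ExteriorAlgebra.ι K f • m := fun m => rfl
  have hφφ : ∀ m, φ (φ m) = 0 := by
    intro m
    rw [hφ, hφ, smul_smul, ExteriorAlgebra.ι_sq_zero, zero_smul]
  obtain ⟨W, hW⟩ := Submodule.exists_isCompl (LinearMap.ker φ)
  let Φ : (W × W) →ₗ[K] M := LinearMap.coprod W.subtype (φ ∘ₗ W.subtype)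
  have hΦ : ∀ p : W × W, Φ p = (p.1 : M) + φ (p.2 : M) := fun p => rfl
  have hWker : ∀ x : W, φ (x : M) = 0 → x = 0 := by
    intro x hx
    have : (x : M) ∈ (LinearMap.ker φ) ⊓ W := ⟨hx, x.2⟩
    rw [hW.inf_eq_bot] at this
    exact Subtype.ext this
  have hinj : Function.Injective Φ := by
    rw [← LinearMap.ker_eq_bot, LinearMap.ker_eq_bot']
    rintro ⟨x, y⟩ hxy
    rw [hΦ] at hxy
    have h1 : φ ((x : M) + φ (y : M)) = 0 := by rw [hxy]; exact map_zero φ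
    rw [map_add, hφφ, add_zero] at h1
    have hx0 : x = 0 := hWker x h1
    have h2 : φ (y : M) = 0 := by
      have := hxy
      rw [hx0] at this
      simpa using this
    have hy0 : y = 0 := hWker y h2
    simp [hx0, hy0]
  have hsurj : Function.Surjective Φ := by
    intro m
    have hm : m ∈ (LinearMap.ker φ) ⊔ W := by rw [hW.sup_eq_top]; trivial
    obtain ⟨k, hk, w, hw, rfl⟩ := Submodule.mem_sup.mp hm
    have hk0 : ExteriorAlgebra.ι K f • k = 0 := LinearMap.mem_ker.mp hk
    obtain ⟨m', hm'⟩ := (hreg k).mp hk0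
    have hm'2 : m' ∈ (LinearMap.ker φ) ⊔ W := by rw [hW.sup_eq_top]; trivial
    obtain ⟨k', hk', w', hw', rfl⟩ := Submodule.mem_sup.mp hm'2
    have hkw : k = φ w' := by
      rw [← hφ] at hm'
      rw [hm', map_add, LinearMap.mem_ker.mp hk', zero_add]
    refine ⟨(⟨w, hw⟩, ⟨w', hw'⟩), ?_⟩
    rw [hΦ, ← hkw]
    exact add_comm w k
  let e := LinearEquiv.ofBijective Φ ⟨hinj, hsurj⟩
  let bW := Module.Basis.ofVectorSpace K W
  let ι := Module.Basis.ofVectorSpaceIndex K W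
  let σ : (ι ⊕ ι) ≃ (ι × Bool) :=
    { toFun := fun x => Sum.elim (fun i => (i, false)) (fun i => (i, true)) x
      invFun := fun p => if p.2 then Sum.inr p.1 else Sum.inl p.1
      left_inv := by rintro (i | i) <;> simp
      right_inv := by rintro ⟨i, (_|_)⟩ <;> simp }
  refine ⟨ι, fun i => (bW i : M), ((bW.prod bW).map e).reindex σ, ?_⟩
  intro i
  constructor
  · have : σ.symm (i, false) = Sum.inl i := rfl
    rw [Module.Basis.reindex_apply, this, Module.Basis.map_apply, Module.Basis.prod_apply]
    show Φ (Sum.elim _ _ (Sum.inl i)) = _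
    simp [hΦ]
  · have : σ.symm (i, true) = Sum.inr i := rfl
    rw [Module.Basis.reindex_apply, this, Module.Basis.map_apply, Module.Basis.prod_apply]
    show Φ (Sum.elim _ _ (Sum.inr i)) = _
    simp [hΦ, hφ]
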